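/- Let 𝒰 be a countably incomplete ultrafilter on an infinite set W, and let (R_w, m_w) be Noetherian local rings whose maximal ideals are each generated by at most n elements. Let (R, m) be their ultraproduct. Then the separated quotient R/⋂_{k≥1} m^k is a Noetherian local ring which is complete with respect to the adic topology of its maximal ideal. -/

import Mathlib

/-- The ideal of the product ring consisting of families that vanish almost
everywhere with respect to the ultrafilter `𝒰`. -/
def almostZero {W : Type*} (𝒰 : Ultrafilter W) (R : W → Type*) [∀ w, CommRing (R w)] :
    Ideal (∀ w, R w) where
  carrier := {f | ∀ᶠ w in (𝒰 : Filter W), f w = 0}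
  zero_mem' := Filter.Eventually.of_forall fun _ => rfl
  add_mem' := by
    intro f g hf hg
    filter_upwards [hf, hg] with w h1 h2
    simp [h1, h2]
  smul_mem' := by
    intro c f hf
    filter_upwards [hf] with w h
    simp [h]

/-- The ultraproduct of a family of commutative rings with respect to an
ultrafilter: the product modulo the ideal of almost-everywhere-zero families. -/
abbrev Ultraproduct {W : Type*} (𝒰 : Ultrafilter W) (R : W → Type*) [∀ w, CommRing (R w)] :
    Type _ :=
  (∀ w, R w) ⧸ almostZero 𝒰 R

theorem isUnit_mk_iff {W : Type*} (𝒰 : Ultrafilter W) (R : W → Type*) [∀ w, CommRing (R w)]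
    (f : ∀ w, R w) :
    IsUnit (Ideal.Quotient.mk (almostZero 𝒰 R) f) ↔ ∀ᶠ w in (𝒰 : Filter W), IsUnit (f w) := by
  constructor
  · rintro ⟨u, hu⟩
    obtain ⟨g, hg⟩ := Ideal.Quotient.mk_surjective (↑u⁻¹ : Ultraproduct 𝒰 R)
    have h1 : Ideal.Quotient.mk (almostZero 𝒰 R) (f * g) =
        Ideal.Quotient.mk (almostZero 𝒰 R) 1 := by
      rw [map_mul, map_one, hg, ← hu, Units.mul_inv]
    have h2 : f * g - 1 ∈ almostZero 𝒰 R := Ideal.Quotient.eq.mp h1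
    filter_upwards [h2] with w hw
    have : f w * g w = 1 := by
      have : f w * g w - 1 = 0 := hw
      linear_combination this
    exact IsUnit.of_mul_eq_one _ this
  · intro hf
    classical
    set g : ∀ w, R w := fun w => if h : IsUnit (f w) then ((h.unit⁻¹ : (R w)ˣ) : R w) else 0
      with hgdef
    have h1 : f * g - 1 ∈ almostZero 𝒰 R := by
      filter_upwards [hf] with w hw
      have : f w * g w = 1 := by
        simp only [hgdef, dif_pos hw]
        exact hw.mul_val_inv
      show f w * g w - 1 = 0
      rw [this, sub_self]
    have h2 : Ideal.Quotient.mk (almostZero 𝒰 R) f *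
        Ideal.Quotient.mk (almostZero 𝒰 R) g = 1 := by
      rw [← map_mul, ← map_one (Ideal.Quotient.mk (almostZero 𝒰 R))]
      exact Ideal.Quotient.eq.mpr h1
    exact IsUnit.of_mul_eq_one _ h2

instance {W : Type*} (𝒰 : Ultrafilter W) (R : W → Type*) [∀ w, CommRing (R w)]
    [∀ w, Nontrivial (R w)] : Nontrivial (Ultraproduct 𝒰 R) := by
  refine ⟨0, 1, fun h => ?_⟩
  have h1 : (0 : ∀ w, R w) - 1 ∈ almostZero 𝒰 R := Ideal.Quotient.eq.mp h
  have h2 : ∀ᶠ w in (𝒰 : Filter W), (0 : R w) - 1 = 0 := h1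
  obtain ⟨w, hw⟩ := h2.exists
  exact one_ne_zero (by linear_combination -hw)

instance {W : Type*} (𝒰 : Ultrafilter W) (R : W → Type*) [∀ w, CommRing (R w)]
    [∀ w, IsLocalRing (R w)] : IsLocalRing (Ultraproduct 𝒰 R) := by
  refine IsLocalRing.of_nonunits_add ?_
  intro a b ha hb
  obtain ⟨f, rfl⟩ := Ideal.Quotient.mk_surjective a
  obtain ⟨g, rfl⟩ := Ideal.Quotient.mk_surjective b
  rw [mem_nonunits_iff, isUnit_mk_iff, ← Ultrafilter.eventually_not] at ha hb
  rw [mem_nonunits_iff, ← map_add, isUnit_mk_iff, ← Ultrafilter.eventually_not]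
  filter_upwards [ha, hb] with w h1 h2
  exact fun h => (IsLocalRing.nonunits_add h1 h2) h

/-- The ideal of infinitesimals of a local ring: the intersection of all powers
of the maximal ideal. -/
def infinitesimals (A : Type*) [CommRing A] [IsLocalRing A] : Ideal A :=
  ⨅ n : ℕ, IsLocalRing.maximalIdeal A ^ (n + 1)


open Ideal MvPolynomial

section Helpers

lemma ideal_smul_top {B : Type*} [CommRing B] (I : Ideal B) :
    (I • ⊤ : Submodule B B) = I := by
  rw [smul_eq_mul, mul_top]

variable {A : Type*} [CommRing A] {n : ℕ}

lemma prod_pow_mem_pow {m : Ideal A} {x : Fin n → A} (hx : ∀ i, x i ∈ m)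
    (d : Fin n → ℕ) (s : Finset (Fin n)) :
    (∏ i ∈ s, x i ^ d i) ∈ m ^ (∑ i ∈ s, d i) := by
  classical
  induction s using Finset.induction with
  | empty => simp
  | insert _ _ h ih =>
    rw [Finset.prod_insert h, Finset.sum_insert h, pow_add]
    exact Ideal.mul_mem_mul (Ideal.pow_mem_pow (hx _) _) ih

lemma prod_mem_pow {m : Ideal A} {k : ℕ} {f : Fin k → A} (hf : ∀ j, f j ∈ m) :
    (∏ j, f j) ∈ m ^ k := by
  have := prod_pow_mem_pow (x := f) (m := m) hf (fun _ => 1) Finset.univ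
  simpa using this

/-- The span of the range of a family, raised to the `k`-th power, is spanned by
the degree-`k` monomials. -/
lemma pow_span_range (v : Fin n → A) (k : ℕ) :
    (Ideal.span (Set.range v)) ^ k =
      Ideal.span (Set.range fun e : Fin k → Fin n => ∏ j, v (e j)) := by
  induction k with
  | zero =>
    simp only [pow_zero]
    symm
    rw [Ideal.one_eq_top, Ideal.eq_top_iff_one]
    refine Ideal.subset_span ?_
    exact ⟨fun j => j.elim0, by simp⟩
  | succ k ih =>
    rw [pow_succ, ih, Ideal.span_mul_span]
    apply le_antisymm
    · rw [Ideal.span_le]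
      rintro z hz
      rw [Set.mem_mul] at hz
      obtain ⟨_, ⟨e, rfl⟩, _, ⟨i, rfl⟩, hz⟩ := hz
      subst hz
      refine Ideal.subset_span ⟨Fin.snoc e i, ?_⟩
      dsimp only
      rw [Fin.prod_univ_castSucc]
      simp [Fin.snoc]
    · rw [Ideal.span_le]
      rintro z ⟨e, rfl⟩
      refine Ideal.subset_span ?_
      simp only [Set.mem_iUnion]
      refine ⟨_, ⟨fun j : Fin k => e j.castSucc, rfl⟩, _, ⟨e (Fin.last k), rfl⟩, ?_⟩
      dsimp only
      rw [Fin.prod_univ_castSucc]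

lemma mem_pow_span_iff (v : Fin n → A) (k : ℕ) {z : A} :
    z ∈ (Ideal.span (Set.range v)) ^ k ↔
      ∃ c : (Fin k → Fin n) → A, ∑ e, c e * ∏ j, v (e j) = z := by
  rw [pow_span_range]
  constructor
  · intro h
    obtain ⟨c, hc⟩ := (Submodule.mem_span_range_iff_exists_fun A).mp h
    exact ⟨c, by simpa [smul_eq_mul] using hc⟩
  · rintro ⟨c, rfl⟩
    exact (Submodule.mem_span_range_iff_exists_fun A).mpr ⟨c, by simp [smul_eq_mul]⟩

lemma degree_eq_of_mem_support {F : MvPolynomial (Fin n) A} {k : ℕ}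
    (hF : F.IsHomogeneous k) {d : Fin n →₀ ℕ} (hd : d ∈ F.support) : d.degree = k := by
  by_contra h
  exact (MvPolynomial.mem_support_iff.mp hd) (hF.coeff_eq_zero h)

lemma eval_isHomogeneous_mem {m c : Ideal A} {x : Fin n → A} (hx : ∀ i, x i ∈ m)
    {F : MvPolynomial (Fin n) A} {k : ℕ} (hF : F.IsHomogeneous k)
    (hc : ∀ d, F.coeff d ∈ c) : MvPolynomial.eval x F ∈ c * m ^ k := by
  rw [MvPolynomial.eval_eq]
  refine Ideal.sum_mem _ fun d hd => ?_
  have hdeg : ∑ i ∈ d.support, d i = k := by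
    have := degree_eq_of_mem_support hF hd
    rwa [Finsupp.degree] at this
  exact hdeg ▸ Ideal.mul_mem_mul (hc d) (prod_pow_mem_pow hx _ _)

lemma eval_isHomogeneous_mem_pow {m : Ideal A} {x : Fin n → A} (hx : ∀ i, x i ∈ m)
    {F : MvPolynomial (Fin n) A} {k : ℕ} (hF : F.IsHomogeneous k) :
    MvPolynomial.eval x F ∈ m ^ k := by
  have := eval_isHomogeneous_mem (c := ⊤) hx hF (fun d => trivial)
  rwa [top_mul] at this

/-- Any element of `m ^ k`, `m = span (range x)`, is the evaluation of a homogeneous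
polynomial of degree `k`. -/
lemma exists_isHomogeneous_eval {x : Fin n → A} {k : ℕ} {z : A}
    (hz : z ∈ (Ideal.span (Set.range x)) ^ k) :
    ∃ F : MvPolynomial (Fin n) A, F.IsHomogeneous k ∧ MvPolynomial.eval x F = z := by
  obtain ⟨c, rfl⟩ := (mem_pow_span_iff x k).mp hz
  refine ⟨∑ e : Fin k → Fin n, MvPolynomial.C (c e) * ∏ j, MvPolynomial.X (e j), ?_, ?_⟩
  · refine MvPolynomial.IsHomogeneous.sum _ _ _ fun e _ => ?_
    have h1 : (MvPolynomial.C (c e) : MvPolynomial (Fin n) A).IsHomogeneous 0 :=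
      MvPolynomial.isHomogeneous_C _ _
    have h2 : (∏ j, (MvPolynomial.X (e j) : MvPolynomial (Fin n) A)).IsHomogeneous k := by
      have := MvPolynomial.IsHomogeneous.prod Finset.univ
        (fun j : Fin k => (MvPolynomial.X (e j) : MvPolynomial (Fin n) A)) (fun _ => 1)
        (fun j _ => MvPolynomial.isHomogeneous_X _ _)
      simpa using this
    simpa using h1.mul h2
  · simp

end Helpers

open Ideal MvPolynomial

section HomComp

variable {K : Type*} [CommRing K] {σ : Type*}

lemma homComp_of_isHomogeneous {p : MvPolynomial σ K} {e k : ℕ} (hp : p.IsHomogeneous e) :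
    homogeneousComponent k p = if e = k then p else 0 := by
  ext d
  rw [coeff_homogeneousComponent]
  by_cases hc : coeff d p = 0
  · split <;> split <;> simp [hc]
  · have hd : d.degree = e := by
      by_contra h
      exact hc (hp.coeff_eq_zero h)
    rw [hd]
    split <;> simp_all

lemma homComp_mul_isHomogeneous {G H : MvPolynomial σ K} {e : ℕ} (hG : G.IsHomogeneous e)
    (k : ℕ) :
    homogeneousComponent k (H * G) =
      if e ≤ k then homogeneousComponent (k - e) H * G else 0 := by
  conv_lhs => rw [← sum_homogeneousComponent H]
  rw [Finset.sum_mul, map_sum]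
  have hterm : ∀ i ∈ Finset.range (H.totalDegree + 1),
      homogeneousComponent k (homogeneousComponent i H * G) =
        if i + e = k then homogeneousComponent i H * G else 0 := by
    intro i _
    exact homComp_of_isHomogeneous ((homogeneousComponent_isHomogeneous i H).mul hG)
  rw [Finset.sum_congr rfl hterm]
  by_cases he : e ≤ k
  · rw [if_pos he]
    have hcond : ∀ x, (x + e = k) = (x = k - e) := by
      intro x; apply propext; omega
    simp only [hcond]
    rw [Finset.sum_ite_eq' (Finset.range (H.totalDegree + 1))]
    split
    · rfl
    · rename_i hmem
      rw [homogeneousComponent_eq_zero _ _ (by simp at hmem; omega), zero_mul]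
  · rw [if_neg he]
    refine Finset.sum_eq_zero fun x _ => ?_
    rw [if_neg (by omega)]

end HomComp

section Decomp

variable {K : Type*} [CommRing K] {σ : Type*}

lemma degree_eq_of_mem_support' {F : MvPolynomial σ K} {k : ℕ}
    (hF : F.IsHomogeneous k) {d : σ →₀ ℕ} (hd : d ∈ F.support) : d.degree = k := by
  by_contra h
  exact (MvPolynomial.mem_support_iff.mp hd) (hF.coeff_eq_zero h)

lemma exists_homog_decomp {ι : Type*} [Fintype ι] {G : ι → MvPolynomial σ K} {dd : ι → ℕ}
    (hG : ∀ j, (G j).IsHomogeneous (dd j)) {g : MvPolynomial σ K} {k : ℕ}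
    (hg : g.IsHomogeneous k) (hmem : g ∈ Ideal.span (Set.range G)) :
    ∃ H : ι → MvPolynomial σ K, (∀ j, (H j).IsHomogeneous (k - dd j)) ∧
      (∀ j, k < dd j → H j = 0) ∧ ∑ j, H j * G j = g := by
  classical
  obtain ⟨c, hc⟩ := (Submodule.mem_span_range_iff_exists_fun _).mp hmem
  refine ⟨fun j => if dd j ≤ k then homogeneousComponent (k - dd j) (c j) else 0,
    fun j => ?_, fun j hj => by dsimp only; rw [if_neg (by omega)], ?_⟩
  · dsimp only
    split
    · exact homogeneousComponent_isHomogeneous _ _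
    · exact isHomogeneous_zero _ _ _
  · have hterm : ∀ j : ι,
        (if dd j ≤ k then homogeneousComponent (k - dd j) (c j) else 0) * G j =
          homogeneousComponent k (c j * G j) := by
      intro j
      rw [homComp_mul_isHomogeneous (hG j)]
      split
      · rfl
      · rw [zero_mul]
    rw [Finset.sum_congr rfl fun j _ => hterm j, ← map_sum]
    have : ∑ j, c j * G j = g := by
      rw [← hc]; exact Finset.sum_congr rfl fun j _ => (smul_eq_mul _ _).symm
    rw [this, homComp_of_isHomogeneous hg, if_pos rfl]

variable {A : Type*} [CommRing A]

noncomputable def liftPoly (s : K → A) (H : MvPolynomial σ K) : MvPolynomial σ A :=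
  ∑ d ∈ H.support, monomial d (s (H.coeff d))

lemma liftPoly_map (π : A →+* K) (s : K → A) (hs : ∀ a, π (s a) = a)
    (H : MvPolynomial σ K) : (liftPoly s H).map π = H := by
  rw [liftPoly, map_sum]
  simp only [MvPolynomial.map_monomial, hs]
  exact (as_sum H).symm

lemma liftPoly_isHomogeneous {H : MvPolynomial σ K} {k : ℕ} (hH : H.IsHomogeneous k)
    (s : K → A) : (liftPoly s H).IsHomogeneous k :=
  IsHomogeneous.sum _ _ _ fun d hd =>
    isHomogeneous_monomial _ (degree_eq_of_mem_support' hH hd)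

lemma liftPoly_zero (s : K → A) : liftPoly (σ := σ) s 0 = 0 := by
  simp [liftPoly]

lemma exists_finset_span_eq {P : Type*} [CommRing P] [IsNoetherianRing P] (S : Set P) :
    ∃ t : Finset P, ↑t ⊆ S ∧ Ideal.span (t : Set P) = Ideal.span S := by
  classical
  have hfg : (Ideal.span S).FG := IsNoetherian.noetherian _
  have hcompact := (Submodule.fg_iff_compact _).mp hfg
  have hle : Ideal.span S ≤ ⨆ x : S, Ideal.span {(x : P)} := by
    show Submodule.span P S ≤ _
    rw [Submodule.span_eq_iSup_of_singleton_spans]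
    apply iSup₂_le
    intro x hx
    exact le_iSup (fun x : S => Ideal.span {(x : P)}) ⟨x, hx⟩
  obtain ⟨u, hu⟩ := CompleteLattice.IsCompactElement.exists_finset_of_le_iSup _ hcompact _ hle
  refine ⟨u.image (fun x : S => (x : P)), ?_, le_antisymm ?_ ?_⟩
  · intro a ha
    rw [Finset.coe_image] at ha
    obtain ⟨x, _, rfl⟩ := ha
    exact x.2
  · apply Ideal.span_mono
    intro a ha
    rw [Finset.coe_image] at ha
    obtain ⟨x, _, rfl⟩ := ha
    exact x.2
  · refine le_trans hu (iSup₂_le fun x hx => ?_)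
    refine (Ideal.span_le).mpr ?_
    intro a ha
    rw [Set.mem_singleton_iff] at ha
    subst ha
    apply Ideal.subset_span
    rw [Finset.coe_image]
    exact ⟨x, hx, rfl⟩

end Decomp
section Core

open Ideal MvPolynomial

variable {A : Type*} [CommRing A] {n : ℕ}

theorem isNoetherianRing_of_adicComplete_span (x : Fin n → A) (m : Ideal A)
    (hm : m = Ideal.span (Set.range x)) [hmax : m.IsMaximal] [hcpl : IsAdicComplete m A] :
    IsNoetherianRing A := by
  classical
  haveI : IsNoetherianRing (MvPolynomial (Fin n) (A ⧸ m)) := by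
    letI := Ideal.Quotient.field m
    exact inferInstance
  set π := Ideal.Quotient.mk m with hπ
  have hx : ∀ i, x i ∈ m := fun i => hm ▸ Ideal.subset_span ⟨i, rfl⟩
  have hsmul : ∀ (k : ℕ), (m ^ k • ⊤ : Submodule A A) = m ^ k := fun k => by
    rw [smul_eq_mul, mul_top]
  rw [isNoetherianRing_iff_ideal_fg]
  intro J
  -- the set of leading forms
  set S : Set (MvPolynomial (Fin n) (A ⧸ m)) :=
    {G | ∃ (k : ℕ) (F : MvPolynomial (Fin n) A), F.IsHomogeneous k ∧ F.map π = G ∧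
      MvPolynomial.eval x F ∈ J ⊔ m ^ (k + 1)} with hS
  obtain ⟨t, htS, htspan⟩ := exists_finset_span_eq S
  have hdata : ∀ j : {G // G ∈ t}, ∃ (k : ℕ) (F : MvPolynomial (Fin n) A),
      F.IsHomogeneous k ∧ F.map π = (j : MvPolynomial (Fin n) (A ⧸ m)) ∧
      MvPolynomial.eval x F ∈ J ⊔ m ^ (k + 1) := fun j => htS j.2
  choose dd Fgen hFhom hFmap hFmem using hdata
  have hdata2 : ∀ j, ∃ uj ∈ J, ∃ vj ∈ m ^ (dd j + 1), uj + vj = MvPolynomial.eval x (Fgen j) :=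
    fun j => Submodule.mem_sup.mp (hFmem j)
  choose u hu v hv huv using hdata2
  have humem : ∀ j, u j ∈ m ^ dd j := by
    intro j
    have h1 : MvPolynomial.eval x (Fgen j) ∈ m ^ dd j :=
      eval_isHomogeneous_mem_pow hx (hFhom j)
    have h2 : v j ∈ m ^ dd j := Ideal.pow_le_pow_right (Nat.le_succ _) (hv j)
    have : u j = MvPolynomial.eval x (Fgen j) - v j := by rw [← huv j]; ring
    rw [this]; exact sub_mem h1 h2
  -- the key approximation step
  have step : ∀ (k : ℕ) (z : A), z ∈ J → z ∈ m ^ k →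
      ∃ c : {G // G ∈ t} → A, (∀ j, c j ∈ m ^ (k - dd j)) ∧
        (z - ∑ j, c j * u j) ∈ J ∧ (z - ∑ j, c j * u j) ∈ m ^ (k + 1) := by
    intro k z hzJ hzm
    obtain ⟨F, hFh, hFe⟩ := exists_isHomogeneous_eval (hm ▸ hzm)
    have hGS : F.map π ∈ S := ⟨k, F, hFh, rfl, Ideal.mem_sup_left (hFe ▸ hzJ)⟩
    have hrange : Set.range (fun j : {G // G ∈ t} => (j : MvPolynomial (Fin n) (A ⧸ m))) =
        (t : Set (MvPolynomial (Fin n) (A ⧸ m))) := Subtype.range_coe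
    have hGmem : F.map π ∈
        Ideal.span (Set.range (fun j : {G // G ∈ t} => (j : MvPolynomial (Fin n) (A ⧸ m)))) := by
      rw [hrange, htspan]
      exact Ideal.subset_span hGS
    have hGj : ∀ j : {G // G ∈ t},
        ((j : MvPolynomial (Fin n) (A ⧸ m))).IsHomogeneous (dd j) := fun j =>
      hFmap j ▸ (hFhom j).map π
    obtain ⟨H, hHhom, hHzero, hHsum⟩ := exists_homog_decomp hGj (hFh.map π) hGmem
    set s : (A ⧸ m) → A := Function.surjInv Ideal.Quotient.mk_surjective with hs'
    have hs : ∀ a, π (s a) = a := fun a => Function.surjInv_eq _ a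
    set c : {G // G ∈ t} → A := fun j => MvPolynomial.eval x (liftPoly s (H j)) with hc'
    have hc : ∀ j, c j ∈ m ^ (k - dd j) := fun j =>
      eval_isHomogeneous_mem_pow hx (liftPoly_isHomogeneous (hHhom j) s)
    set F2 : MvPolynomial (Fin n) A := F - ∑ j, liftPoly s (H j) * Fgen j with hF2
    have hF2hom : F2.IsHomogeneous k := by
      refine hFh.sub (MvPolynomial.IsHomogeneous.sum _ _ _ fun j _ => ?_)
      by_cases hj : dd j ≤ k
      · have := (liftPoly_isHomogeneous (hHhom j) s).mul (hFhom j)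
        rwa [Nat.sub_add_cancel hj] at this
      · rw [hHzero j (by omega), liftPoly_zero, zero_mul]
        exact isHomogeneous_zero _ _ _
    have hF2map : F2.map π = 0 := by
      rw [hF2, map_sub, map_sum]
      have : ∀ j : {G // G ∈ t}, (MvPolynomial.map π) (liftPoly s (H j) * Fgen j)
          = H j * (j : MvPolynomial (Fin n) (A ⧸ m)) := by
        intro j
        rw [_root_.map_mul, liftPoly_map π s hs, hFmap j]
      rw [Finset.sum_congr rfl fun j _ => this j, hHsum, sub_self]
    have hF2coeff : ∀ d, F2.coeff d ∈ m := by
      intro d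
      have : π (F2.coeff d) = 0 := by
        rw [← MvPolynomial.coeff_map, hF2map, MvPolynomial.coeff_zero]
      exact (Ideal.Quotient.eq_zero_iff_mem).mp this
    have hevalF2 : MvPolynomial.eval x F2 ∈ m ^ (k + 1) := by
      have := eval_isHomogeneous_mem hx hF2hom hF2coeff
      rwa [← pow_succ'] at this
    have hkey : z - ∑ j, c j * u j = MvPolynomial.eval x F2 + ∑ j, c j * v j := by
      rw [hF2, map_sub, map_sum, hFe]
      have : ∀ j : {G // G ∈ t}, MvPolynomial.eval x (liftPoly s (H j) * Fgen j)
          = c j * (u j + v j) := by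
        intro j
        rw [_root_.map_mul, huv j, hc']
      rw [Finset.sum_congr rfl fun j _ => this j]
      simp only [mul_add, Finset.sum_add_distrib]
      ring
    refine ⟨c, hc, ?_, ?_⟩
    · exact sub_mem hzJ (Ideal.sum_mem _ fun j _ => Ideal.mul_mem_left _ _ (hu j))
    · rw [hkey]
      refine add_mem hevalF2 (Ideal.sum_mem _ fun j _ => ?_)
      have := Ideal.mul_mem_mul (hc j) (hv j)
      rw [← pow_add] at this
      exact Ideal.pow_le_pow_right (by omega) this
  have step' : ∀ (k : ℕ) (z : A), ∃ c : {G // G ∈ t} → A,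
      z ∈ J → z ∈ m ^ k →
      (∀ j, c j ∈ m ^ (k - dd j)) ∧ (z - ∑ j, c j * u j) ∈ J ∧
        (z - ∑ j, c j * u j) ∈ m ^ (k + 1) := by
    intro k z
    by_cases h : z ∈ J ∧ z ∈ m ^ k
    · obtain ⟨c, h1, h2, h3⟩ := step k z h.1 h.2
      exact ⟨c, fun _ _ => ⟨h1, h2, h3⟩⟩
    · exact ⟨0, fun h1 h2 => absurd ⟨h1, h2⟩ h⟩
  choose cf hcf using step'
  have main : ∀ z ∈ J, z ∈ Ideal.span (Set.range u) := by
    intro z hz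
    set Z : ℕ → A := fun k =>
      Nat.rec (motive := fun _ => A) z (fun k zk => zk - ∑ j, cf k zk j * u j) k with hZ
    have hZ0 : Z 0 = z := rfl
    have hZsucc : ∀ k, Z (k + 1) = Z k - ∑ j, cf k (Z k) j * u j := fun k => rfl
    have hZmem : ∀ k, Z k ∈ J ∧ Z k ∈ m ^ k := by
      intro k
      induction k with
      | zero => exact ⟨hz, by simp⟩
      | succ k ih =>
        obtain ⟨-, h2, h3⟩ := hcf k (Z k) ih.1 ih.2
        rw [hZsucc k]
        exact ⟨h2, h3⟩
    set cc : ℕ → {G // G ∈ t} → A := fun k => cf k (Z k) with hcc'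
    have hccmem : ∀ k j, cc k j ∈ m ^ (k - dd j) := fun k j =>
      (hcf k (Z k) (hZmem k).1 (hZmem k).2).1 j
    have htel : ∀ N, z - ∑ j, (∑ i ∈ Finset.range N, cc i j) * u j = Z N := by
      intro N
      induction N with
      | zero => simp [hZ0]
      | succ N ih =>
        have hstep : z - ∑ j, (∑ i ∈ Finset.range (N + 1), cc i j) * u j
            = (z - ∑ j, (∑ i ∈ Finset.range N, cc i j) * u j) - ∑ j, cc N j * u j := by
          simp only [Finset.sum_range_succ, add_mul, Finset.sum_add_distrib]
          ring
        rw [hstep, ih, hZsucc N]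
    have hcauchy : ∀ j : {G // G ∈ t}, ∃ L, ∀ N,
        (∑ i ∈ Finset.range (N + dd j), cc i j) ≡ L [SMOD (m ^ N • ⊤ : Submodule A A)] := by
      intro j
      refine IsPrecomplete.prec hcpl.toIsPrecomplete ?_
      intro a b hab
      rw [SModEq.sub_mem, hsmul]
      have hdec : (∑ i ∈ Finset.range (a + dd j), cc i j) -
          (∑ i ∈ Finset.range (b + dd j), cc i j) =
          -(∑ i ∈ Finset.Ico (a + dd j) (b + dd j), cc i j) := by
        rw [Finset.sum_Ico_eq_sub _ (by omega)]
        ring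
      rw [hdec]
      refine neg_mem (Ideal.sum_mem _ fun i hi => ?_)
      rw [Finset.mem_Ico] at hi
      exact Ideal.pow_le_pow_right (by omega) (hccmem i j)
    choose L hL using hcauchy
    set D := Finset.univ.sup dd with hD
    have hdd : ∀ j, dd j ≤ D := fun j => Finset.le_sup (Finset.mem_univ j)
    have hdiff : ∀ N : ℕ, z - ∑ j, L j * u j ∈ m ^ N := by
      intro N
      have key : z - ∑ j, L j * u j =
          Z (N + D) + ∑ j, ((∑ i ∈ Finset.range (N + D), cc i j) - L j) * u j := by
        rw [← htel (N + D)]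
        simp only [sub_mul, Finset.sum_sub_distrib]
        ring
      rw [key]
      refine add_mem (Ideal.pow_le_pow_right (by omega) (hZmem (N + D)).2)
        (Ideal.sum_mem _ fun j _ => Ideal.mul_mem_right _ _ ?_)
      have hNj : (N + D - dd j) + dd j = N + D := by
        have := hdd j; omega
      have := hL j (N + D - dd j)
      rw [SModEq.sub_mem, hsmul, hNj] at this
      exact Ideal.pow_le_pow_right (by have := hdd j; omega) this
    have hzero : z - ∑ j, L j * u j = 0 := by
      refine IsHausdorff.haus hcpl.toIsHausdorff _ fun N => ?_
      rw [SModEq.zero, hsmul]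
      exact hdiff N
    have hfinal : z = ∑ j, L j * u j := by
      have h := hzero
      rw [sub_eq_zero] at h
      exact h
    rw [hfinal]
    exact Ideal.sum_mem _ fun j _ =>
      Ideal.mul_mem_left _ _ (Ideal.subset_span ⟨j, rfl⟩)
  have hJ : J = Ideal.span (Set.range u) := by
    refine le_antisymm main (Ideal.span_le.mpr ?_)
    rintro _ ⟨j, rfl⟩
    exact hu j
  rw [hJ]
  exact Submodule.fg_span (Set.finite_range u)

end Core
set_option maxHeartbeats 1600000
set_option synthInstance.maxHeartbeats 1000000

section Ultra

open Ideal IsLocalRing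

variable {W : Type*} (𝒰 : Ultrafilter W) (R : W → Type*) [∀ w, CommRing (R w)]
  [∀ w, IsLocalRing (R w)] {n : ℕ}

lemma ultra_mk_mem_maximalIdeal_iff (f : ∀ w, R w) :
    Ideal.Quotient.mk (almostZero 𝒰 R) f ∈ maximalIdeal (Ultraproduct 𝒰 R) ↔
      ∀ᶠ w in (𝒰 : Filter W), f w ∈ maximalIdeal (R w) := by
  rw [IsLocalRing.mem_maximalIdeal, mem_nonunits_iff, isUnit_mk_iff 𝒰 R f,
    ← Ultrafilter.eventually_not]
  exact Filter.eventually_congr (Filter.Eventually.of_forall fun w => by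
    rw [IsLocalRing.mem_maximalIdeal, mem_nonunits_iff])

lemma ultra_maximalIdeal_eq_span (x : ∀ w, Fin n → R w)
    (hx : ∀ w, Ideal.span (Set.range (x w)) = maximalIdeal (R w)) :
    maximalIdeal (Ultraproduct 𝒰 R) =
      Ideal.span (Set.range fun i => Ideal.Quotient.mk (almostZero 𝒰 R) (fun w => x w i)) := by
  classical
  apply le_antisymm
  · intro a ha
    obtain ⟨f, rfl⟩ := Ideal.Quotient.mk_surjective a
    rw [ultra_mk_mem_maximalIdeal_iff] at ha
    set c : Fin n → ∀ w, R w := fun i w =>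
      if h : f w ∈ Ideal.span (Set.range (x w)) then
        Classical.choose ((Submodule.mem_span_range_iff_exists_fun (R w)).mp h) i else 0 with hc
    have hgood : ∀ᶠ w in (𝒰 : Filter W), f w = ∑ i, c i w * x w i := by
      filter_upwards [ha] with w hw
      have hw' : f w ∈ Ideal.span (Set.range (x w)) := (hx w) ▸ hw
      have hspec := Classical.choose_spec ((Submodule.mem_span_range_iff_exists_fun (R w)).mp hw')
      rw [← hspec]
      refine Finset.sum_congr rfl fun i _ => ?_
      rw [hc]
      simp only [dif_pos hw', smul_eq_mul]
    have h2 : Ideal.Quotient.mk (almostZero 𝒰 R) f =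
        Ideal.Quotient.mk (almostZero 𝒰 R) (∑ i, c i * fun w => x w i) := by
      rw [Ideal.Quotient.eq]
      filter_upwards [hgood] with w hw
      show f w - (∑ i, c i * fun w => x w i) w = 0
      rw [Finset.sum_apply]
      simp only [Pi.mul_apply]
      rw [← hw, sub_self]
    rw [h2, map_sum]
    refine Ideal.sum_mem _ fun i _ => ?_
    rw [_root_.map_mul]
    exact Ideal.mul_mem_left _ _ (Ideal.subset_span ⟨i, rfl⟩)
  · rw [Ideal.span_le]
    rintro _ ⟨i, rfl⟩
    rw [SetLike.mem_coe, ultra_mk_mem_maximalIdeal_iff]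
    exact Filter.Eventually.of_forall fun w => (hx w) ▸ Ideal.subset_span ⟨i, rfl⟩

lemma ultra_mk_mem_pow_iff (x : ∀ w, Fin n → R w)
    (hx : ∀ w, Ideal.span (Set.range (x w)) = maximalIdeal (R w)) (k : ℕ) (f : ∀ w, R w) :
    Ideal.Quotient.mk (almostZero 𝒰 R) f ∈ (maximalIdeal (Ultraproduct 𝒰 R)) ^ k ↔
      ∀ᶠ w in (𝒰 : Filter W), f w ∈ (maximalIdeal (R w)) ^ k := by
  classical
  rw [ultra_maximalIdeal_eq_span 𝒰 R x hx]
  constructor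
  · intro h
    obtain ⟨c, hc⟩ := (mem_pow_span_iff _ k).mp h
    choose g hg using fun e => Ideal.Quotient.mk_surjective (c e)
    have h2 : Ideal.Quotient.mk (almostZero 𝒰 R)
        (∑ e : Fin k → Fin n, g e * ∏ j, (fun w => x w (e j))) =
        Ideal.Quotient.mk (almostZero 𝒰 R) f := by
      rw [map_sum, ← hc]
      refine Finset.sum_congr rfl fun e _ => ?_
      rw [_root_.map_mul, hg, map_prod]
    have hm := Ideal.Quotient.eq.mp h2
    filter_upwards [hm] with w hw
    have hfw : f w = ∑ e : Fin k → Fin n, g e w * ∏ j, x w (e j) := by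
      have hw' : (∑ e : Fin k → Fin n, g e * ∏ j, (fun w => x w (e j))) w - f w = 0 := hw
      rw [Finset.sum_apply] at hw'
      simp only [Pi.mul_apply, Finset.prod_apply] at hw'
      have := sub_eq_zero.mp hw'
      rw [← this]
    rw [hfw]
    refine Ideal.sum_mem _ fun e _ => Ideal.mul_mem_left _ _ ?_
    exact prod_mem_pow fun j => (hx w) ▸ Ideal.subset_span ⟨e j, rfl⟩
  · intro h
    set c : (Fin k → Fin n) → ∀ w, R w := fun e w =>
      if hmem : f w ∈ (Ideal.span (Set.range (x w))) ^ k then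
        Classical.choose ((mem_pow_span_iff (x w) k).mp hmem) e else 0 with hcdef
    have hgood : ∀ᶠ w in (𝒰 : Filter W), f w = ∑ e, c e w * ∏ j, x w (e j) := by
      filter_upwards [h] with w hw
      have hw' : f w ∈ (Ideal.span (Set.range (x w))) ^ k := by rw [hx w]; exact hw
      have hspec := Classical.choose_spec ((mem_pow_span_iff (x w) k).mp hw')
      rw [← hspec]
      refine Finset.sum_congr rfl fun e _ => ?_
      rw [hcdef]
      simp only [dif_pos hw']
    have h2 : Ideal.Quotient.mk (almostZero 𝒰 R) f =
        Ideal.Quotient.mk (almostZero 𝒰 R) (∑ e, c e * fun w => ∏ j, x w (e j)) := by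
      rw [Ideal.Quotient.eq]
      filter_upwards [hgood] with w hw
      show f w - (∑ e, c e * fun w => ∏ j, x w (e j)) w = 0
      rw [Finset.sum_apply]
      simp only [Pi.mul_apply]
      rw [← hw, sub_self]
    rw [h2]
    refine (mem_pow_span_iff _ k).mpr
      ⟨fun e => Ideal.Quotient.mk (almostZero 𝒰 R) (c e), ?_⟩
    have h3 : ∀ e : Fin k → Fin n,
        (Ideal.Quotient.mk (almostZero 𝒰 R)) (c e) *
          ∏ j, (Ideal.Quotient.mk (almostZero 𝒰 R)) (fun w => x w (e j)) =
        (Ideal.Quotient.mk (almostZero 𝒰 R)) (c e * fun w => ∏ j, x w (e j)) := by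
      intro e
      rw [_root_.map_mul]
      congr 1
      rw [← map_prod]
      congr 1
      funext w
      rw [Finset.prod_apply]
    rw [Finset.sum_congr rfl fun e _ => h3 e, ← map_sum]

lemma ultra_complete
    (hcc : ∃ s : ℕ → Set W, (∀ n, s n ∈ 𝒰) ∧ (⋂ n, s n) = ∅) (g : ℕ → ∀ w, R w)
    (hg : ∀ k, ∀ᶠ w in (𝒰 : Filter W), g (k+1) w - g k w ∈ (maximalIdeal (R w)) ^ k) :
    ∃ G : ∀ w, R w, ∀ k, ∀ᶠ w in (𝒰 : Filter W), G w - g k w ∈ (maximalIdeal (R w)) ^ k := by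
  classical
  obtain ⟨s, hs𝒰, hsempty⟩ := hcc
  set T : ℕ → Set W := fun k =>
    (⋂ j ∈ Set.Iic k, {w | g (j+1) w - g j w ∈ (maximalIdeal (R w)) ^ j}) ∩
      ⋂ j ∈ Set.Iic k, s j with hT
  have hT𝒰 : ∀ k, T k ∈ 𝒰 := by
    intro k
    refine Filter.inter_mem ?_ ?_
    · exact (Filter.biInter_mem (Set.finite_Iic k)).mpr fun j _ => hg j
    · exact (Filter.biInter_mem (Set.finite_Iic k)).mpr fun j _ => hs𝒰 j
  have hTanti : ∀ a b : ℕ, a ≤ b → T b ⊆ T a := by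
    intro a b hab
    refine Set.inter_subset_inter ?_ ?_ <;>
      exact Set.biInter_subset_biInter_left (Set.Iic_subset_Iic.mpr hab)
  have hTempty : ∀ w, ∃ k, w ∉ T k := by
    intro w
    by_contra hcon
    push_neg at hcon
    have : w ∈ ⋂ j, s j := Set.mem_iInter.mpr fun j =>
      Set.mem_iInter₂.mp (hcon j).2 j (Set.mem_Iic.mpr le_rfl)
    rw [hsempty] at this
    exact this
  refine ⟨fun w => g (Nat.find (hTempty w)) w, ?_⟩
  intro k
  filter_upwards [hT𝒰 k] with w hw
  set dw := Nat.find (hTempty w) with hdw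
  have hdk : k < dw := by
    by_contra hcon
    push_neg at hcon
    exact (Nat.find_spec (hTempty w)) (hTanti _ _ hcon hw)
  have hm : ∀ i, k ≤ i → i < dw → g (i+1) w - g i w ∈ (maximalIdeal (R w)) ^ k := by
    intro i hki hid
    have hwTi : w ∈ T i := by
      have hmin := Nat.find_min (hTempty w) hid
      by_contra hcon
      exact hmin hcon
    have hmem : g (i+1) w - g i w ∈ (maximalIdeal (R w)) ^ i :=
      Set.mem_iInter₂.mp hwTi.1 i (Set.mem_Iic.mpr le_rfl)
    exact Ideal.pow_le_pow_right hki hmem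
  have htel : g dw w - g k w = ∑ i ∈ Finset.Ico k dw, (g (i+1) w - g i w) := by
    rw [Finset.sum_Ico_eq_sub _ (le_of_lt hdk), Finset.sum_range_sub (fun i => g i w),
      Finset.sum_range_sub (fun i => g i w)]
    ring
  show g dw w - g k w ∈ _
  rw [htel]
  exact Ideal.sum_mem _ fun i hi =>
    hm i (Finset.mem_Ico.mp hi).1 (Finset.mem_Ico.mp hi).2

end Ultra

set_option synthInstance.maxHeartbeats 1000000 in
/-- The separated quotient of an ultraproduct of Noetherian local rings of
bounded embedding dimension is a complete Noetherian local ring. -/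
theorem stmt_4 {W : Type*} [Infinite W] (𝒰 : Ultrafilter W)
    (hcc : ∃ s : ℕ → Set W, (∀ n, s n ∈ 𝒰) ∧ (⋂ n, s n) = ∅)
    (R : W → Type*) [∀ w, CommRing (R w)] [∀ w, IsLocalRing (R w)]
    [∀ w, IsNoetherianRing (R w)] (n : ℕ)
    (hgen : ∀ w, ∃ x : Fin n → R w,
      Ideal.span (Set.range x) = IsLocalRing.maximalIdeal (R w)) :
    ∃ h : IsLocalRing (Ultraproduct 𝒰 R ⧸ infinitesimals (Ultraproduct 𝒰 R)),
      IsNoetherianRing (Ultraproduct 𝒰 R ⧸ infinitesimals (Ultraproduct 𝒰 R)) ∧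
      IsAdicComplete (@IsLocalRing.maximalIdeal _ _ h)
        (Ultraproduct 𝒰 R ⧸ infinitesimals (Ultraproduct 𝒰 R)) := by
  classical
  choose x hx using hgen
  set q := Ideal.Quotient.mk (infinitesimals (Ultraproduct 𝒰 R)) with hqdef
  have hInfle : ∀ k, infinitesimals (Ultraproduct 𝒰 R) ≤
      (IsLocalRing.maximalIdeal (Ultraproduct 𝒰 R)) ^ k := by
    intro k
    cases k with
    | zero => simp
    | succ k => exact iInf_le _ k
  have hMne : IsLocalRing.maximalIdeal (Ultraproduct 𝒰 R) ≠ ⊤ :=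
    Ideal.IsMaximal.ne_top (IsLocalRing.maximalIdeal.isMaximal _)
  have hInfTop : infinitesimals (Ultraproduct 𝒰 R) ≠ ⊤ := by
    intro h
    apply hMne
    rw [Ideal.eq_top_iff_one] at h ⊢
    have h1 := hInfle 1 h
    rwa [pow_one] at h1
  haveI : Nontrivial (Ultraproduct 𝒰 R ⧸ infinitesimals (Ultraproduct 𝒰 R)) :=
    Ideal.Quotient.nontrivial_iff.mpr hInfTop
  haveI hloc : IsLocalRing (Ultraproduct 𝒰 R ⧸ infinitesimals (Ultraproduct 𝒰 R)) :=
    IsLocalRing.of_surjective' q Ideal.Quotient.mk_surjective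
  have hmax : IsLocalRing.maximalIdeal (Ultraproduct 𝒰 R ⧸ infinitesimals (Ultraproduct 𝒰 R)) =
      Ideal.map q (IsLocalRing.maximalIdeal (Ultraproduct 𝒰 R)) := by
    apply le_antisymm
    · intro y hy
      obtain ⟨a, rfl⟩ := Ideal.Quotient.mk_surjective y
      rw [IsLocalRing.mem_maximalIdeal, mem_nonunits_iff] at hy
      have ha : a ∈ IsLocalRing.maximalIdeal (Ultraproduct 𝒰 R) := by
        rw [IsLocalRing.mem_maximalIdeal, mem_nonunits_iff]
        intro hu
        exact hy (hu.map q)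
      exact Ideal.mem_map_of_mem q ha
    · rw [Ideal.map_le_iff_le_comap]
      intro a ha
      rw [Ideal.mem_comap, IsLocalRing.mem_maximalIdeal, mem_nonunits_iff]
      intro hu
      obtain ⟨b, hb⟩ := isUnit_iff_exists_inv.mp hu
      obtain ⟨b', rfl⟩ := Ideal.Quotient.mk_surjective b
      have hq1 : q (a * b') = q 1 := by rw [_root_.map_mul, map_one]; exact hb
      have h1 := Ideal.Quotient.eq.mp hq1
      have h1' : a * b' - 1 ∈ IsLocalRing.maximalIdeal (Ultraproduct 𝒰 R) := by
        have := hInfle 1 h1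
        rwa [pow_one] at this
      have h3 := (IsLocalRing.maximalIdeal (Ultraproduct 𝒰 R)).sub_mem
        (Ideal.mul_mem_right b' _ ha) h1'
      have h2 : (1 : Ultraproduct 𝒰 R) ∈ IsLocalRing.maximalIdeal (Ultraproduct 𝒰 R) := by
        simpa using h3
      exact hMne ((Ideal.eq_top_iff_one _).mpr h2)
  have hmaxpow : ∀ k : ℕ,
      (IsLocalRing.maximalIdeal (Ultraproduct 𝒰 R ⧸ infinitesimals (Ultraproduct 𝒰 R))) ^ k
      = Ideal.map q ((IsLocalRing.maximalIdeal (Ultraproduct 𝒰 R)) ^ k) := by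
    intro k; rw [hmax, Ideal.map_pow]
  haveI hH : IsHausdorff
      (IsLocalRing.maximalIdeal (Ultraproduct 𝒰 R ⧸ infinitesimals (Ultraproduct 𝒰 R)))
      (Ultraproduct 𝒰 R ⧸ infinitesimals (Ultraproduct 𝒰 R)) := by
    constructor
    intro y hy
    obtain ⟨a, rfl⟩ := Ideal.Quotient.mk_surjective y
    have hmem : ∀ k : ℕ, a ∈ (IsLocalRing.maximalIdeal (Ultraproduct 𝒰 R)) ^ k := by
      intro k
      have h1 := hy k
      rw [SModEq.zero, ideal_smul_top, hmaxpow k] at h1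
      obtain ⟨b, hb, hab⟩ :=
        (Ideal.mem_map_iff_of_surjective q Ideal.Quotient.mk_surjective).mp h1
      have h2 : b - a ∈ infinitesimals (Ultraproduct 𝒰 R) := Ideal.Quotient.eq.mp hab
      have h3 : a = b - (b - a) := by ring
      rw [h3]
      exact sub_mem hb (hInfle k h2)
    exact Ideal.Quotient.eq_zero_iff_mem.mpr (Ideal.mem_iInf.mpr fun i => hmem (i + 1))
  haveI hP : IsPrecomplete
      (IsLocalRing.maximalIdeal (Ultraproduct 𝒰 R ⧸ infinitesimals (Ultraproduct 𝒰 R)))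
      (Ultraproduct 𝒰 R ⧸ infinitesimals (Ultraproduct 𝒰 R)) := by
    constructor
    intro a ha
    have hsurj : Function.Surjective
        (fun f : (∀ w, R w) => q (Ideal.Quotient.mk (almostZero 𝒰 R) f)) :=
      Function.Surjective.comp Ideal.Quotient.mk_surjective Ideal.Quotient.mk_surjective
    choose g hg using fun k => hsurj (a k)
    have hg' : ∀ k, q (Ideal.Quotient.mk (almostZero 𝒰 R) (g k)) = a k := fun k => hg k
    have hstep : ∀ k, ∀ᶠ w in (𝒰 : Filter W),
        g (k+1) w - g k w ∈ (IsLocalRing.maximalIdeal (R w)) ^ k := by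
      intro k
      have h1 := ha (Nat.le_succ k)
      rw [SModEq.sub_mem, ideal_smul_top, hmaxpow k] at h1
      obtain ⟨b, hb, hab⟩ :=
        (Ideal.mem_map_iff_of_surjective q Ideal.Quotient.mk_surjective).mp h1
      have h3 : Ideal.Quotient.mk (almostZero 𝒰 R) (g k - g (k+1)) - b ∈
          infinitesimals (Ultraproduct 𝒰 R) := by
        apply Ideal.Quotient.eq.mp
        rw [map_sub (Ideal.Quotient.mk (almostZero 𝒰 R)), map_sub q, hg' k, hg' (k+1), hab]
      have h4 : Ideal.Quotient.mk (almostZero 𝒰 R) (g k - g (k+1)) ∈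
          (IsLocalRing.maximalIdeal (Ultraproduct 𝒰 R)) ^ k := by
        have h5 : Ideal.Quotient.mk (almostZero 𝒰 R) (g k - g (k+1)) =
            (Ideal.Quotient.mk (almostZero 𝒰 R) (g k - g (k+1)) - b) + b := by ring
        rw [h5]
        exact add_mem (hInfle k h3) hb
      have h5 := (ultra_mk_mem_pow_iff 𝒰 R x hx k (g k - g (k+1))).mp h4
      filter_upwards [h5] with w hw
      have h6 : g (k+1) w - g k w = -((g k - g (k+1)) w) := by
        simp [Pi.sub_apply]
      rw [h6]
      exact neg_mem hw
    obtain ⟨G, hG⟩ := ultra_complete 𝒰 R hcc g hstep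
    refine ⟨q (Ideal.Quotient.mk (almostZero 𝒰 R) G), fun k => ?_⟩
    rw [SModEq.sub_mem, ideal_smul_top, hmaxpow k]
    have h6 : Ideal.Quotient.mk (almostZero 𝒰 R) (G - g k) ∈
        (IsLocalRing.maximalIdeal (Ultraproduct 𝒰 R)) ^ k :=
      (ultra_mk_mem_pow_iff 𝒰 R x hx k _).mpr (hG k)
    have h7 : a k - q (Ideal.Quotient.mk (almostZero 𝒰 R) G) =
        q (Ideal.Quotient.mk (almostZero 𝒰 R) (g k - G)) := by
      rw [map_sub (Ideal.Quotient.mk (almostZero 𝒰 R)), map_sub q, hg' k]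
    rw [h7]
    apply Ideal.mem_map_of_mem
    have h8 : Ideal.Quotient.mk (almostZero 𝒰 R) (g k - G) =
        -(Ideal.Quotient.mk (almostZero 𝒰 R) (G - g k)) := by
      rw [← map_neg]
      congr 1
      ring
    rw [h8]
    exact neg_mem h6
  haveI hAC : IsAdicComplete
      (IsLocalRing.maximalIdeal (Ultraproduct 𝒰 R ⧸ infinitesimals (Ultraproduct 𝒰 R)))
      (Ultraproduct 𝒰 R ⧸ infinitesimals (Ultraproduct 𝒰 R)) := ⟨⟩
  have hNoeth : IsNoetherianRing (Ultraproduct 𝒰 R ⧸ infinitesimals (Ultraproduct 𝒰 R)) := by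
    refine isNoetherianRing_of_adicComplete_span
      (x := fun i => q (Ideal.Quotient.mk (almostZero 𝒰 R) (fun w => x w i)))
      (IsLocalRing.maximalIdeal (Ultraproduct 𝒰 R ⧸ infinitesimals (Ultraproduct 𝒰 R))) ?_
    rw [hmax, ultra_maximalIdeal_eq_span 𝒰 R x hx, Ideal.map_span]
    congr 1
    rw [← Set.range_comp]
    rfl
  exact ⟨hloc, hNoeth, hAC⟩
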